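/- Let L = ℤω₁ + ℤω₂ be a lattice in ℂ with Weierstrass function ℘, and let n be a positive integer. For every z ∈ ℂ with nz ∉ L, Σ_{j,k=0}^{n−1} ℘′((z + jω₁ + kω₂)/n) = n³ ℘′(z). -/

import Mathlib

open scoped BigOperators

/-- The Weierstrass `℘`-function attached to the lattice `L = ℤω₁ + ℤω₂`. -/
noncomputable def wp (ω₁ ω₂ : ℂ) (z : ℂ) : ℂ :=
  1 / z ^ 2 + ∑' p : ℤ × ℤ,
    if p = 0 then 0 else
      (1 / (z - (p.1 * ω₁ + p.2 * ω₂)) ^ 2 - 1 / (p.1 * ω₁ + p.2 * ω₂) ^ 2)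

/-- The lattice `L = ℤω₁ + ℤω₂ ⊆ ℂ`. -/
def lat (ω₁ ω₂ : ℂ) : Set ℂ := {w | ∃ m k : ℤ, w = m * ω₁ + k * ω₂}

namespace WpAux

noncomputable def cL (ω₁ ω₂ : ℂ) (p : ℤ × ℤ) : ℂ := p.1 * ω₁ + p.2 * ω₂

lemma norm_cast_vec (x : Fin 2 → ℤ) : ‖(fun i => (x i : ℝ))‖ = ‖x‖ := by
  rw [← coe_nnnorm, ← coe_nnnorm, NNReal.coe_inj, Pi.nnnorm_def, Pi.nnnorm_def]
  congr 1

lemma vec_ne_zero {p : ℤ × ℤ} (hp : p ≠ 0) : (![p.1, p.2] : Fin 2 → ℤ) ≠ 0 := by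
  intro h0
  apply hp
  have h1 := congrFun h0 0
  have h2 := congrFun h0 1
  simp at h1 h2
  exact Prod.ext h1 h2

lemma exists_antilip {ω₁ ω₂ : ℂ} (hindep : LinearIndependent ℝ ![ω₁, ω₂]) :
    ∃ K : ℝ, 0 < K ∧ ∀ p : ℤ × ℤ, ‖(![p.1, p.2] : Fin 2 → ℤ)‖ ≤ K * ‖cL ω₁ ω₂ p‖ := by
  classical
  let f : (Fin 2 → ℝ) →ₗ[ℝ] ℂ :=
    { toFun := fun v => v 0 * ω₁ + v 1 * ω₂
      map_add' := by intro a b; simp; ring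
      map_smul' := by intro c a; simp [Complex.real_smul]; ring }
  have hinj : Function.Injective f := by
    intro a b hab
    have h0 : f (a - b) = 0 := by
      simp only [map_sub, hab, sub_self]
    have := Fintype.linearIndependent_iff.mp hindep (a - b) ?_
    · funext i; have := this i; simpa [sub_eq_zero] using this
    · have : ∑ i, (a - b) i • ![ω₁, ω₂] i = (a - b) 0 * ω₁ + (a - b) 1 * ω₂ := by
        simp [Fin.sum_univ_two, Complex.real_smul]
      rw [this]; exact h0
  obtain ⟨K, hK0, hK⟩ := (LinearMap.injective_iff_antilipschitz f).mp hinj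
  refine ⟨K, hK0, fun p => ?_⟩
  have h1 := hK.le_mul_norm (map_zero f) (fun i => ((![p.1, p.2] : Fin 2 → ℤ) i : ℝ))
  rw [norm_cast_vec] at h1
  have h2 : f (fun i => ((![p.1, p.2] : Fin 2 → ℤ) i : ℝ)) = cL ω₁ ω₂ p := by
    simp [f, cL]
  rwa [h2] at h1

lemma cL_norm_pos {ω₁ ω₂ : ℂ} (hindep : LinearIndependent ℝ ![ω₁, ω₂]) {p : ℤ × ℤ}
    (hp : p ≠ 0) : 0 < ‖cL ω₁ ω₂ p‖ := by
  obtain ⟨K, hK0, hK⟩ := exists_antilip hindep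
  have hv : 0 < ‖(![p.1, p.2] : Fin 2 → ℤ)‖ := norm_pos_iff.mpr (vec_ne_zero hp)
  nlinarith [hK p]

lemma cL_injective {ω₁ ω₂ : ℂ} (hindep : LinearIndependent ℝ ![ω₁, ω₂]) :
    Function.Injective (cL ω₁ ω₂) := by
  intro p q h
  by_contra hpq
  have hne : p - q ≠ 0 := sub_ne_zero.mpr (by exact fun h' => hpq h')
  have h0 : cL ω₁ ω₂ (p - q) = 0 := by
    simp only [cL, Prod.fst_sub, Prod.snd_sub, Int.cast_sub] at *
    linear_combination h
  have := cL_norm_pos hindep hne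
  rw [h0] at this; simp at this

lemma summable_master {ω₁ ω₂ : ℂ} (hindep : LinearIndependent ℝ ![ω₁, ω₂]) :
    Summable fun p : ℤ × ℤ => ‖cL ω₁ ω₂ p‖⁻¹ ^ 3 := by
  obtain ⟨K, hK0, hK⟩ := exists_antilip hindep
  have hE := EisensteinSeries.summable_one_div_norm_rpow (k := 3) (by norm_num)
  have hE1 : Summable fun p : ℤ × ℤ => ‖(![p.1, p.2] : Fin 2 → ℤ)‖ ^ (-3 : ℝ) :=
    (finTwoArrowEquiv ℤ).symm.summable_iff (f := fun x : Fin 2 → ℤ => ‖x‖ ^ (-3 : ℝ)) |>.mpr hE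
  have hE2 : Summable fun p : ℤ × ℤ => K ^ 3 * ‖(![p.1, p.2] : Fin 2 → ℤ)‖⁻¹ ^ 3 := by
    refine (hE1.mul_left (K ^ 3)).congr fun p => ?_
    rw [Real.rpow_neg (norm_nonneg _), show ((3:ℝ)) = ((3:ℕ):ℝ) by norm_num,
      Real.rpow_natCast, inv_pow]
  apply hE2.of_nonneg_of_le (fun p => by positivity)
  intro p
  rcases eq_or_ne p 0 with rfl | hp
  · simp [cL]
    positivity
  · have hv : 0 < ‖(![p.1, p.2] : Fin 2 → ℤ)‖ := norm_pos_iff.mpr (vec_ne_zero hp)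
    have hc : 0 < ‖cL ω₁ ω₂ p‖ := cL_norm_pos hindep hp
    have hx : ‖cL ω₁ ω₂ p‖⁻¹ ≤ K * ‖(![p.1, p.2] : Fin 2 → ℤ)‖⁻¹ := by
      have hmul := mul_le_mul_of_nonneg_right (hK p)
        (le_of_lt (mul_pos (inv_pos.mpr hv) (inv_pos.mpr hc)))
      calc ‖cL ω₁ ω₂ p‖⁻¹
          = ‖(![p.1, p.2] : Fin 2 → ℤ)‖ * (‖(![p.1, p.2] : Fin 2 → ℤ)‖⁻¹ * ‖cL ω₁ ω₂ p‖⁻¹) := by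
            rw [← mul_assoc, mul_inv_cancel₀ hv.ne', one_mul]
        _ ≤ K * ‖cL ω₁ ω₂ p‖ * (‖(![p.1, p.2] : Fin 2 → ℤ)‖⁻¹ * ‖cL ω₁ ω₂ p‖⁻¹) := hmul
        _ = K * ‖(![p.1, p.2] : Fin 2 → ℤ)‖⁻¹ * (‖cL ω₁ ω₂ p‖ * ‖cL ω₁ ω₂ p‖⁻¹) := by ring
        _ = K * ‖(![p.1, p.2] : Fin 2 → ℤ)‖⁻¹ := by rw [mul_inv_cancel₀ hc.ne', mul_one]
    calc ‖cL ω₁ ω₂ p‖⁻¹ ^ 3 ≤ (K * ‖(![p.1, p.2] : Fin 2 → ℤ)‖⁻¹) ^ 3 := by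
          apply pow_le_pow_left₀ (by positivity) hx
      _ = K ^ 3 * ‖(![p.1, p.2] : Fin 2 → ℤ)‖⁻¹ ^ 3 := by ring


lemma finite_small {ω₁ ω₂ : ℂ} (hindep : LinearIndependent ℝ ![ω₁, ω₂]) (M : ℝ) :
    {p : ℤ × ℤ | ‖cL ω₁ ω₂ p‖ ≤ M}.Finite := by
  obtain ⟨K, hK0, hK⟩ := exists_antilip hindep
  set B : ℤ := ⌈K * M⌉ with hB
  apply Set.Finite.subset (Set.finite_Icc ((-B, -B) : ℤ × ℤ) (B, B))
  intro p hp
  simp only [Set.mem_setOf_eq] at hp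
  have h1 : ∀ i : Fin 2, |((![p.1, p.2] : Fin 2 → ℤ) i : ℝ)| ≤ K * M := by
    intro i
    calc |((![p.1, p.2] : Fin 2 → ℤ) i : ℝ)| = ‖(![p.1, p.2] : Fin 2 → ℤ) i‖ := by
          rw [← Int.norm_cast_real]; rfl
      _ ≤ ‖(![p.1, p.2] : Fin 2 → ℤ)‖ := norm_le_pi_norm _ i
      _ ≤ K * ‖cL ω₁ ω₂ p‖ := hK p
      _ ≤ K * M := by nlinarith
  have h2 : |(p.1 : ℝ)| ≤ K * M := by simpa using h1 0
  have h3 : |(p.2 : ℝ)| ≤ K * M := by simpa using h1 1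
  have hceil : K * M ≤ (B : ℝ) := Int.le_ceil _
  rw [abs_le] at h2 h3
  have e1 : -B ≤ p.1 ∧ p.1 ≤ B := by
    constructor
    · have : ((-B : ℤ) : ℝ) ≤ (p.1 : ℝ) := by push_cast; linarith
      exact_mod_cast this
    · exact_mod_cast le_trans h2.2 hceil
  have e2 : -B ≤ p.2 ∧ p.2 ≤ B := by
    constructor
    · have : ((-B : ℤ) : ℝ) ≤ (p.2 : ℝ) := by push_cast; linarith
      exact_mod_cast this
    · exact_mod_cast le_trans h3.2 hceil
  simp [Set.mem_Icc, Prod.le_def, e1.1, e1.2, e2.1, e2.2]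

lemma summable_of_tail_bound {ω₁ ω₂ : ℂ} (hindep : LinearIndependent ℝ ![ω₁, ω₂])
    {E : Type*} [NormedAddCommGroup E] [CompleteSpace E] {f : ℤ × ℤ → E} (M C : ℝ)
    (h : ∀ p : ℤ × ℤ, M < ‖cL ω₁ ω₂ p‖ → ‖f p‖ ≤ C * ‖cL ω₁ ω₂ p‖⁻¹ ^ 3) :
    Summable f := by
  have hfin := finite_small hindep M
  rw [← hfin.summable_compl_iff]
  apply Summable.of_norm_bounded (((summable_master hindep).mul_left C).subtype _)
  rintro ⟨p, hp⟩
  simp only [Set.mem_compl_iff, Set.mem_setOf_eq, not_le] at hp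
  exact h p hp

lemma inv_anti {a b : ℝ} (ha : 0 < a) (hab : a ≤ b) : b⁻¹ ≤ a⁻¹ := by
  rw [inv_le_inv₀ (lt_of_lt_of_le ha hab) ha]
  exact hab

/-- summability of the cube-inverse series -/
lemma summable_S {ω₁ ω₂ : ℂ} (hindep : LinearIndependent ℝ ![ω₁, ω₂]) (a : ℂ) :
    Summable fun p : ℤ × ℤ => ((a - cL ω₁ ω₂ p) ^ 3)⁻¹ := by
  apply summable_of_tail_bound hindep (2 * ‖a‖) 8
  intro p hp
  have hc : 0 < ‖cL ω₁ ω₂ p‖ := lt_of_le_of_lt (by positivity) hp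
  have h1 : ‖cL ω₁ ω₂ p‖ / 2 ≤ ‖a - cL ω₁ ω₂ p‖ := by
    have := norm_sub_norm_le (cL ω₁ ω₂ p) a
    have h2 : ‖cL ω₁ ω₂ p - a‖ = ‖a - cL ω₁ ω₂ p‖ := norm_sub_rev _ _
    linarith
  have h3 : ‖a - cL ω₁ ω₂ p‖⁻¹ ≤ 2 * ‖cL ω₁ ω₂ p‖⁻¹ := by
    have := inv_anti (by positivity : (0:ℝ) < ‖cL ω₁ ω₂ p‖ / 2) h1
    rw [show (‖cL ω₁ ω₂ p‖ / 2)⁻¹ = 2 * ‖cL ω₁ ω₂ p‖⁻¹ by field_simp] at this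
    exact this
  calc ‖((a - cL ω₁ ω₂ p) ^ 3)⁻¹‖ = (‖a - cL ω₁ ω₂ p‖⁻¹) ^ 3 := by
        rw [norm_inv, norm_pow, inv_pow]
    _ ≤ (2 * ‖cL ω₁ ω₂ p‖⁻¹) ^ 3 := pow_le_pow_left₀ (by positivity) h3 3
    _ = 8 * ‖cL ω₁ ω₂ p‖⁻¹ ^ 3 := by ring

/-- summability of the wp series itself at a point -/
lemma summable_wp_term {ω₁ ω₂ : ℂ} (hindep : LinearIndependent ℝ ![ω₁, ω₂]) (z : ℂ) :
    Summable fun p : ℤ × ℤ =>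
      if p = 0 then (0:ℂ) else (1 / (z - cL ω₁ ω₂ p) ^ 2 - 1 / cL ω₁ ω₂ p ^ 2) := by
  apply summable_of_tail_bound hindep (2 * ‖z‖ + 2) (12 * ‖z‖)
  intro p hp
  have hc : 0 < ‖cL ω₁ ω₂ p‖ := lt_of_le_of_lt (by positivity) hp
  have hp0 : p ≠ 0 := by
    intro h
    have h0 : cL ω₁ ω₂ (0 : ℤ × ℤ) = 0 := by simp [cL]
    rw [h, h0, norm_zero] at hp
    nlinarith [norm_nonneg z]
  have hzc : z - cL ω₁ ω₂ p ≠ 0 := by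
    intro h
    have : ‖z‖ = ‖cL ω₁ ω₂ p‖ := by rw [show z = cL ω₁ ω₂ p from by linear_combination h]
    nlinarith
  have hcne : cL ω₁ ω₂ p ≠ 0 := norm_pos_iff.mp hc
  have hid : 1 / (z - cL ω₁ ω₂ p) ^ 2 - 1 / cL ω₁ ω₂ p ^ 2
      = z * (2 * cL ω₁ ω₂ p - z) * (((z - cL ω₁ ω₂ p) ^ 2) * (cL ω₁ ω₂ p ^ 2))⁻¹ := by
    field_simp
    ring
  have h1 : ‖cL ω₁ ω₂ p‖ / 2 ≤ ‖z - cL ω₁ ω₂ p‖ := by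
    have := norm_sub_norm_le (cL ω₁ ω₂ p) z
    have h2 : ‖cL ω₁ ω₂ p - z‖ = ‖z - cL ω₁ ω₂ p‖ := norm_sub_rev _ _
    linarith
  have h2 : ‖2 * cL ω₁ ω₂ p - z‖ ≤ 3 * ‖cL ω₁ ω₂ p‖ := by
    calc ‖2 * cL ω₁ ω₂ p - z‖ ≤ ‖2 * cL ω₁ ω₂ p‖ + ‖z‖ := norm_sub_le _ _
      _ = 2 * ‖cL ω₁ ω₂ p‖ + ‖z‖ := by rw [norm_mul]; norm_num
      _ ≤ 3 * ‖cL ω₁ ω₂ p‖ := by nlinarith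
  rw [if_neg hp0, hid]
  have hnorm : ‖z * (2 * cL ω₁ ω₂ p - z) * (((z - cL ω₁ ω₂ p) ^ 2) * (cL ω₁ ω₂ p ^ 2))⁻¹‖
      = ‖z‖ * ‖2 * cL ω₁ ω₂ p - z‖ * ((‖z - cL ω₁ ω₂ p‖ ^ 2) * (‖cL ω₁ ω₂ p‖ ^ 2))⁻¹ := by
    rw [norm_mul, norm_mul, norm_inv, norm_mul, norm_pow, norm_pow]
  rw [hnorm]
  have hinv : ((‖z - cL ω₁ ω₂ p‖ ^ 2) * (‖cL ω₁ ω₂ p‖ ^ 2))⁻¹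
      ≤ (((‖cL ω₁ ω₂ p‖ / 2) ^ 2) * (‖cL ω₁ ω₂ p‖ ^ 2))⁻¹ := by
    apply inv_anti (by positivity)
    have : (‖cL ω₁ ω₂ p‖ / 2) ^ 2 ≤ ‖z - cL ω₁ ω₂ p‖ ^ 2 :=
      pow_le_pow_left₀ (by positivity) h1 2
    nlinarith [sq_nonneg ‖cL ω₁ ω₂ p‖]
  calc ‖z‖ * ‖2 * cL ω₁ ω₂ p - z‖ * ((‖z - cL ω₁ ω₂ p‖ ^ 2) * (‖cL ω₁ ω₂ p‖ ^ 2))⁻¹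
      ≤ ‖z‖ * (3 * ‖cL ω₁ ω₂ p‖) * (((‖cL ω₁ ω₂ p‖ / 2) ^ 2) * (‖cL ω₁ ω₂ p‖ ^ 2))⁻¹ := by
        apply mul_le_mul (by nlinarith [norm_nonneg z]) hinv (by positivity) (by positivity)
    _ = 12 * ‖z‖ * ‖cL ω₁ ω₂ p‖⁻¹ ^ 3 := by
        have hcn : ‖cL ω₁ ω₂ p‖ ≠ 0 := ne_of_gt hc
        field_simp
        ring

noncomputable def gfun (ω₁ ω₂ : ℂ) (p : ℤ × ℤ) (y : ℂ) : ℂ :=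
  if p = 0 then 0 else (1 / (y - cL ω₁ ω₂ p) ^ 2 - 1 / cL ω₁ ω₂ p ^ 2)

noncomputable def gfun' (ω₁ ω₂ : ℂ) (p : ℤ × ℤ) (y : ℂ) : ℂ :=
  if p = 0 then 0 else -2 * ((y - cL ω₁ ω₂ p) ^ 3)⁻¹

lemma wp_eq (ω₁ ω₂ : ℂ) : wp ω₁ ω₂ = fun y => 1 / y ^ 2 + ∑' p : ℤ × ℤ, gfun ω₁ ω₂ p y := rfl

lemma hasDerivAt_gfun (ω₁ ω₂ : ℂ) (p : ℤ × ℤ) (y : ℂ) (hy : y ≠ cL ω₁ ω₂ p) :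
    HasDerivAt (gfun ω₁ ω₂ p) (gfun' ω₁ ω₂ p y) y := by
  rcases eq_or_ne p 0 with rfl | hp0
  · have h1 : gfun ω₁ ω₂ 0 = fun _ => (0:ℂ) := by funext w; simp [gfun]
    have h2 : gfun' ω₁ ω₂ 0 y = 0 := by simp [gfun']
    rw [h1, h2]
    exact hasDerivAt_const y 0
  · have hyne : y - cL ω₁ ω₂ p ≠ 0 := sub_ne_zero.mpr hy
    have h1 : HasDerivAt (fun w : ℂ => (w - cL ω₁ ω₂ p) ^ 2) (2 * (y - cL ω₁ ω₂ p)) y := by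
      simpa [Pi.pow_def] using ((hasDerivAt_id y).sub_const (cL ω₁ ω₂ p)).pow 2
    have h2 := h1.inv (pow_ne_zero 2 hyne)
    have h3 := h2.sub_const (1 / cL ω₁ ω₂ p ^ 2)
    have hfun : gfun ω₁ ω₂ p = fun w => ((w - cL ω₁ ω₂ p) ^ 2)⁻¹ - 1 / cL ω₁ ω₂ p ^ 2 := by
      funext w; simp [gfun, if_neg hp0, one_div]
    rw [hfun]
    have hval : gfun' ω₁ ω₂ p y = -(2 * (y - cL ω₁ ω₂ p)) / ((y - cL ω₁ ω₂ p) ^ 2) ^ 2 := by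
      rw [gfun', if_neg hp0]
      field_simp
    rw [hval]
    exact h3

lemma wp_hasDerivAt {ω₁ ω₂ : ℂ} (hindep : LinearIndependent ℝ ![ω₁, ω₂]) {z : ℂ}
    (hz : ∀ p : ℤ × ℤ, z ≠ cL ω₁ ω₂ p) :
    HasDerivAt (wp ω₁ ω₂) (-2 * ∑' p : ℤ × ℤ, ((z - cL ω₁ ω₂ p) ^ 3)⁻¹) z := by
  classical
  open Metric in
  obtain ⟨r, hr0, hr1, hrp⟩ : ∃ r : ℝ, 0 < r ∧ r ≤ 1 ∧ ∀ p, 2 * r ≤ ‖z - cL ω₁ ω₂ p‖ := by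
    set F := (finite_small hindep (2 * ‖z‖ + 2)).toFinset with hF
    by_cases hne : F.Nonempty
    · set d := F.inf' hne fun p => ‖z - cL ω₁ ω₂ p‖ with hd
      have hdpos : 0 < d := by
        rw [hd]
        apply (Finset.lt_inf'_iff hne).mpr
        intro p _
        exact norm_pos_iff.mpr (sub_ne_zero.mpr (hz p))
      refine ⟨min 1 (d / 2), by positivity, min_le_left _ _, fun p => ?_⟩
      by_cases hpF : p ∈ F
      · have : d ≤ ‖z - cL ω₁ ω₂ p‖ := Finset.inf'_le _ hpF
        have h2 : 2 * min 1 (d / 2) ≤ 2 * (d / 2) := by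
          have := min_le_right 1 (d / 2); linarith
        linarith
      · have hbig : 2 * ‖z‖ + 2 < ‖cL ω₁ ω₂ p‖ := by
          by_contra hle
          exact hpF ((finite_small hindep (2 * ‖z‖ + 2)).mem_toFinset.mpr
            (by push_neg at hle; exact hle))
        have : ‖z‖ + 2 ≤ ‖z - cL ω₁ ω₂ p‖ := by
          have := norm_sub_norm_le (cL ω₁ ω₂ p) z
          have h2 : ‖cL ω₁ ω₂ p - z‖ = ‖z - cL ω₁ ω₂ p‖ := norm_sub_rev _ _
          linarith
        have := min_le_left 1 (d / 2)
        nlinarith [norm_nonneg z]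
    · refine ⟨1, one_pos, le_refl _, fun p => ?_⟩
      have hbig : 2 * ‖z‖ + 2 < ‖cL ω₁ ω₂ p‖ := by
        by_contra hle
        exact hne ⟨p, (finite_small hindep (2 * ‖z‖ + 2)).mem_toFinset.mpr
          (by push_neg at hle; exact hle)⟩
      have := norm_sub_norm_le (cL ω₁ ω₂ p) z
      have h2 : ‖cL ω₁ ω₂ p - z‖ = ‖z - cL ω₁ ω₂ p‖ := norm_sub_rev _ _
      nlinarith [norm_nonneg z]
  have hball : ∀ y ∈ Metric.ball z r, ∀ p, r ≤ ‖y - cL ω₁ ω₂ p‖ := by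
    intro y hy p
    have h1 : ‖y - z‖ < r := by rwa [Metric.mem_ball, dist_eq_norm] at hy
    have h2 : ‖z - cL ω₁ ω₂ p‖ - ‖z - y‖ ≤ ‖y - cL ω₁ ω₂ p‖ := by
      have := norm_sub_le_norm_sub_add_norm_sub z y (cL ω₁ ω₂ p)
      linarith
    have h3 : ‖z - y‖ = ‖y - z‖ := norm_sub_rev _ _
    linarith [hrp p]
  have hhalf : ∀ y ∈ Metric.ball z r, ∀ p, 2 * ‖z‖ + 2 < ‖cL ω₁ ω₂ p‖ →
      ‖cL ω₁ ω₂ p‖ / 2 ≤ ‖y - cL ω₁ ω₂ p‖ := by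
    intro y hy p hbig
    have h1 : ‖y - z‖ < r := by rwa [Metric.mem_ball, dist_eq_norm] at hy
    have hy' : ‖y‖ ≤ ‖z‖ + r := by
      have := norm_sub_norm_le y z
      linarith
    have h2 : ‖cL ω₁ ω₂ p‖ - ‖y‖ ≤ ‖y - cL ω₁ ω₂ p‖ := by
      have := norm_sub_norm_le (cL ω₁ ω₂ p) y
      have h3 : ‖cL ω₁ ω₂ p - y‖ = ‖y - cL ω₁ ω₂ p‖ := norm_sub_rev _ _
      linarith
    linarith
  set F := (finite_small hindep (2 * ‖z‖ + 2)).toFinset with hF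
  set u : ℤ × ℤ → ℝ := fun p => (if p ∈ F then 2 / r ^ 3 else 0) + 16 * ‖cL ω₁ ω₂ p‖⁻¹ ^ 3
    with hu_def
  have hu : Summable u := by
    apply Summable.add
    · exact summable_of_ne_finset_zero (s := F) (fun p hp => if_neg hp)
    · exact (summable_master hindep).mul_left 16
  have hderiv : ∀ p : ℤ × ℤ, ∀ y ∈ Metric.ball z r,
      HasDerivAt (gfun ω₁ ω₂ p) (gfun' ω₁ ω₂ p y) y := by
    intro p y hy
    apply hasDerivAt_gfun
    intro hcon
    have := hball y hy p
    rw [hcon] at this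
    simp at this
    linarith
  have hbound : ∀ p : ℤ × ℤ, ∀ y ∈ Metric.ball z r, ‖gfun' ω₁ ω₂ p y‖ ≤ u p := by
    intro p y hy
    have hupos2 : (0:ℝ) ≤ 16 * ‖cL ω₁ ω₂ p‖⁻¹ ^ 3 := by positivity
    rcases eq_or_ne p 0 with rfl | hp0
    · have : gfun' ω₁ ω₂ 0 y = 0 := by simp [gfun']
      rw [this, norm_zero, hu_def]
      apply add_nonneg _ hupos2
      split_ifs <;> positivity
    · have hnorm : ‖gfun' ω₁ ω₂ p y‖ = 2 * (‖y - cL ω₁ ω₂ p‖⁻¹) ^ 3 := by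
        rw [gfun', if_neg hp0, norm_mul, norm_inv, norm_pow, inv_pow]
        norm_num
      rw [hnorm]
      simp only [hu_def]
      by_cases hpF : p ∈ F
      · rw [if_pos hpF]
        have h1 := hball y hy p
        have h2 : ‖y - cL ω₁ ω₂ p‖⁻¹ ≤ r⁻¹ := inv_anti hr0 h1
        have h3 : (‖y - cL ω₁ ω₂ p‖⁻¹) ^ 3 ≤ (r⁻¹) ^ 3 :=
          pow_le_pow_left₀ (by positivity) h2 3
        have : 2 / r ^ 3 = 2 * (r⁻¹) ^ 3 := by field_simp
        nlinarith
      · rw [if_neg hpF]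
        have hbig : 2 * ‖z‖ + 2 < ‖cL ω₁ ω₂ p‖ := by
          by_contra hle
          exact hpF ((finite_small hindep (2 * ‖z‖ + 2)).mem_toFinset.mpr
            (by push_neg at hle; exact hle))
        have h1 := hhalf y hy p hbig
        have hcpos : 0 < ‖cL ω₁ ω₂ p‖ := lt_of_le_of_lt (by positivity) hbig
        have h2 : ‖y - cL ω₁ ω₂ p‖⁻¹ ≤ (‖cL ω₁ ω₂ p‖ / 2)⁻¹ :=
          inv_anti (by positivity) h1
        have h2' : (‖cL ω₁ ω₂ p‖ / 2)⁻¹ = 2 * ‖cL ω₁ ω₂ p‖⁻¹ := by field_simp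
        have h3 : (‖y - cL ω₁ ω₂ p‖⁻¹) ^ 3 ≤ (2 * ‖cL ω₁ ω₂ p‖⁻¹) ^ 3 :=
          pow_le_pow_left₀ (by positivity) (h2.trans_eq h2') 3
        have h4 : (2 * ‖cL ω₁ ω₂ p‖⁻¹) ^ 3 = 8 * ‖cL ω₁ ω₂ p‖⁻¹ ^ 3 := by ring
        nlinarith
  have hg0 : Summable fun p : ℤ × ℤ => gfun ω₁ ω₂ p z := by
    have := summable_wp_term hindep z
    exact this.congr fun p => rfl
  have key := hasDerivAt_tsum_of_isPreconnected hu Metric.isOpen_ball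
    (convex_ball z r).isPreconnected hderiv hbound (Metric.mem_ball_self hr0) hg0
    (Metric.mem_ball_self hr0)
  have hz0 : z ≠ 0 := by
    have := hz 0
    simpa [cL] using this
  have h1 : HasDerivAt (fun y : ℂ => y ^ 2) (2 * z) z := by
    simpa using hasDerivAt_pow 2 z
  have h2 := h1.inv (pow_ne_zero 2 hz0)
  have h0 : HasDerivAt (fun y : ℂ => 1 / y ^ 2) (-2 * (z ^ 3)⁻¹) z := by
    have hval : (-2 : ℂ) * (z ^ 3)⁻¹ = -(2 * z) / (z ^ 2) ^ 2 := by
      field_simp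
    rw [hval]
    simpa [one_div, Pi.inv_def] using h2
  have total := h0.add key
  have hval : -2 * ∑' p : ℤ × ℤ, ((z - cL ω₁ ω₂ p) ^ 3)⁻¹
      = -2 * (z ^ 3)⁻¹ + ∑' p : ℤ × ℤ, gfun' ω₁ ω₂ p z := by
    have hS := (summable_S hindep z).mul_left (-2 : ℂ)
    rw [← tsum_mul_left]
    have e1 : (-2:ℂ) * ((z - cL ω₁ ω₂ (0 : ℤ × ℤ)) ^ 3)⁻¹ = -2 * (z ^ 3)⁻¹ := by simp [cL]
    have e2 : ∑' p : ℤ × ℤ, (if p = (0 : ℤ × ℤ) then (0:ℂ) else -2 * ((z - cL ω₁ ω₂ p) ^ 3)⁻¹)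
        = ∑' p : ℤ × ℤ, gfun' ω₁ ω₂ p z := by
      apply tsum_congr
      intro p
      rcases eq_or_ne p 0 with rfl | hp0
      · simp [gfun']
      · simp [gfun', if_neg hp0]
    rw [Summable.tsum_eq_add_tsum_ite hS 0, e1, e2]
  rw [hval, wp_eq]
  exact total


def eAdd (n : ℕ) (hn : 0 < n) : Fin n × ℤ ≃ ℤ where
  toFun x := (n : ℤ) * x.2 + (x.1 : ℤ)
  invFun q := (⟨(q % (n : ℤ)).toNat, by
      have h1 : 0 ≤ q % (n : ℤ) := Int.emod_nonneg q (by exact_mod_cast hn.ne')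
      have h2 : q % (n : ℤ) < n := Int.emod_lt_of_pos q (by exact_mod_cast hn)
      omega⟩, q / (n : ℤ))
  left_inv := by
    rintro ⟨j, m⟩
    have hj0 : (0 : ℤ) ≤ (j : ℤ) := by positivity
    have hjn : (j : ℤ) < n := by exact_mod_cast j.isLt
    have hmod : ((n : ℤ) * m + (j : ℤ)) % n = (j : ℤ) := by
      rw [add_comm, Int.add_mul_emod_self_left, Int.emod_eq_of_lt hj0 hjn]
    have hdiv : ((n : ℤ) * m + (j : ℤ)) / n = m := by
      rw [add_comm, Int.add_mul_ediv_left _ _ (by exact_mod_cast hn.ne' : (n:ℤ) ≠ 0),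
        Int.ediv_eq_zero_of_lt hj0 hjn, zero_add]
    ext
    · simp [hmod]
    · simp [hdiv]
  right_inv := by
    intro q
    simp only
    have h1 : 0 ≤ q % (n : ℤ) := Int.emod_nonneg q (by exact_mod_cast hn.ne')
    rw [Int.toNat_of_nonneg h1]
    exact Int.mul_ediv_add_emod q n

lemma core_sum {f : ℤ × ℤ → ℂ} (hsum : Summable f) (n : ℕ) (hn : 0 < n) :
    ∑ j ∈ Finset.range n, ∑ k ∈ Finset.range n,
      ∑' m : ℤ × ℤ, f (-((n:ℤ) * m.1 + (j:ℤ)), -((n:ℤ) * m.2 + (k:ℤ)))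
    = ∑' q : ℤ × ℤ, f q := by
  classical
  set eA : Fin n × ℤ ≃ ℤ := (eAdd n hn).trans (Equiv.neg ℤ) with heA
  have heA_apply : ∀ (j : Fin n) (a : ℤ), eA (j, a) = -((n:ℤ) * a + (j : ℤ)) := by
    intro j a; rfl
  set E : (Fin n × Fin n) × (ℤ × ℤ) ≃ ℤ × ℤ :=
    (Equiv.prodProdProdComm (Fin n) (Fin n) ℤ ℤ).trans (eA.prodCongr eA) with hE
  have hE_apply : ∀ (jk : Fin n × Fin n) (m : ℤ × ℤ),
      E (jk, m) = (eA (jk.1, m.1), eA (jk.2, m.2)) := by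
    intro jk m; rfl
  have hsum2 : Summable (f ∘ E) := E.summable_iff.mpr hsum
  calc ∑ j ∈ Finset.range n, ∑ k ∈ Finset.range n,
        ∑' m : ℤ × ℤ, f (-((n:ℤ) * m.1 + (j:ℤ)), -((n:ℤ) * m.2 + (k:ℤ)))
      = ∑ j : Fin n, ∑ k : Fin n,
        ∑' m : ℤ × ℤ, f (-((n:ℤ) * m.1 + (j:ℤ)), -((n:ℤ) * m.2 + (k:ℤ))) := by
        rw [← Fin.sum_univ_eq_sum_range (fun j => ∑ k ∈ Finset.range n,
          ∑' m : ℤ × ℤ, f (-((n:ℤ) * m.1 + (j:ℤ)), -((n:ℤ) * m.2 + (k:ℤ)))) n]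
        apply Finset.sum_congr rfl
        intro j _
        rw [← Fin.sum_univ_eq_sum_range]
    _ = ∑ jk : Fin n × Fin n, ∑' m : ℤ × ℤ, f (E (jk, m)) := by
        rw [Fintype.sum_prod_type]
        apply Finset.sum_congr rfl; intro j _
        apply Finset.sum_congr rfl; intro k _
        apply tsum_congr; intro m
        rw [hE_apply, heA_apply, heA_apply]
    _ = ∑' jk : Fin n × Fin n, ∑' m : ℤ × ℤ, f (E (jk, m)) := (tsum_fintype _).symm
    _ = ∑' x : (Fin n × Fin n) × (ℤ × ℤ), f (E x) := (Summable.tsum_prod hsum2).symm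
    _ = ∑' q : ℤ × ℤ, f q := E.tsum_eq f


end WpAux

/-- For every `z` with `nz ∉ L`, `Σ_{j,k=0}^{n-1} ℘′((z + jω₁ + kω₂)/n) = n³ ℘′(z)`:
the sum of `℘′` over the `n²` preimages of `z` under multiplication by `n` on `ℂ/L`. -/
theorem wp_deriv_division_points_sum (ω₁ ω₂ : ℂ)
    (hindep : LinearIndependent ℝ ![ω₁, ω₂])
    (n : ℕ) (hn : 0 < n) (z : ℂ) (hz : (n : ℂ) * z ∉ lat ω₁ ω₂) :
    ∑ j ∈ Finset.range n, ∑ k ∈ Finset.range n,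
        deriv (wp ω₁ ω₂) ((z + j * ω₁ + k * ω₂) / n) = n ^ 3 * deriv (wp ω₁ ω₂) z := by
  classical
  have hn0 : (n : ℂ) ≠ 0 := by exact_mod_cast hn.ne'
  have hzlat : ∀ p : ℤ × ℤ, z ≠ WpAux.cL ω₁ ω₂ p := by
    intro p h
    simp only [WpAux.cL] at h
    exact hz ⟨n * p.1, n * p.2, by push_cast; linear_combination (n:ℂ) * h⟩
  have hpt : ∀ j k : ℕ, ∀ p : ℤ × ℤ,
      (z + (j:ℂ) * ω₁ + (k:ℂ) * ω₂) / n ≠ WpAux.cL ω₁ ω₂ p := by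
    intro j k p h
    rw [div_eq_iff hn0] at h
    simp only [WpAux.cL] at h
    exact hz ⟨n * (n * p.1 - (j:ℤ)), n * (n * p.2 - (k:ℤ)), by
      push_cast; linear_combination (n:ℂ) * h⟩
  have hterm : ∀ j k : ℕ,
      deriv (wp ω₁ ω₂) ((z + (j:ℂ) * ω₁ + (k:ℂ) * ω₂) / n)
      = -2 * ((n:ℂ) ^ 3 * ∑' m : ℤ × ℤ,
          ((z - WpAux.cL ω₁ ω₂ (-((n:ℤ) * m.1 + (j:ℤ)), -((n:ℤ) * m.2 + (k:ℤ)))) ^ 3)⁻¹) := by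
    intro j k
    rw [(WpAux.wp_hasDerivAt hindep (hpt j k)).deriv]
    congr 1
    calc ∑' p : ℤ × ℤ, (((z + (j:ℂ) * ω₁ + (k:ℂ) * ω₂) / n - WpAux.cL ω₁ ω₂ p) ^ 3)⁻¹
        = ∑' p : ℤ × ℤ, (n:ℂ) ^ 3 *
            (((z + (j:ℂ) * ω₁ + (k:ℂ) * ω₂) - n * WpAux.cL ω₁ ω₂ p) ^ 3)⁻¹ := by
          apply tsum_congr; intro p
          have hstep : (z + (j:ℂ) * ω₁ + (k:ℂ) * ω₂) / n - WpAux.cL ω₁ ω₂ p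
              = ((z + (j:ℂ) * ω₁ + (k:ℂ) * ω₂) - n * WpAux.cL ω₁ ω₂ p) / n := by
            field_simp
          rw [hstep, div_pow, inv_div, div_eq_mul_inv]
      _ = (n:ℂ) ^ 3 * ∑' p : ℤ × ℤ,
            (((z + (j:ℂ) * ω₁ + (k:ℂ) * ω₂) - n * WpAux.cL ω₁ ω₂ p) ^ 3)⁻¹ := tsum_mul_left
      _ = (n:ℂ) ^ 3 * ∑' m : ℤ × ℤ,
            ((z - WpAux.cL ω₁ ω₂ (-((n:ℤ) * m.1 + (j:ℤ)), -((n:ℤ) * m.2 + (k:ℤ)))) ^ 3)⁻¹ := by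
          congr 1
          have hneg := (Equiv.neg (ℤ × ℤ)).tsum_eq
            (f := fun p : ℤ × ℤ => (((z + (j:ℂ) * ω₁ + (k:ℂ) * ω₂) - n * WpAux.cL ω₁ ω₂ p) ^ 3)⁻¹)
          rw [← hneg]
          apply tsum_congr; intro m
          congr 2
          simp only [WpAux.cL, Equiv.neg_apply, Prod.fst_neg, Prod.snd_neg]
          push_cast
          ring
  have hfin := WpAux.core_sum (WpAux.summable_S hindep z) n hn
  rw [(WpAux.wp_hasDerivAt hindep hzlat).deriv]
  calc ∑ j ∈ Finset.range n, ∑ k ∈ Finset.range n,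
        deriv (wp ω₁ ω₂) ((z + (j:ℂ) * ω₁ + (k:ℂ) * ω₂) / n)
      = ∑ j ∈ Finset.range n, ∑ k ∈ Finset.range n, (-2 * (n:ℂ) ^ 3) *
          ∑' m : ℤ × ℤ,
            ((z - WpAux.cL ω₁ ω₂ (-((n:ℤ) * m.1 + (j:ℤ)), -((n:ℤ) * m.2 + (k:ℤ)))) ^ 3)⁻¹ := by
        apply Finset.sum_congr rfl; intro j _
        apply Finset.sum_congr rfl; intro k _
        rw [hterm j k]; ring
    _ = (-2 * (n:ℂ) ^ 3) * ∑ j ∈ Finset.range n, ∑ k ∈ Finset.range n,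
          ∑' m : ℤ × ℤ,
            ((z - WpAux.cL ω₁ ω₂ (-((n:ℤ) * m.1 + (j:ℤ)), -((n:ℤ) * m.2 + (k:ℤ)))) ^ 3)⁻¹ := by
        rw [Finset.mul_sum]
        apply Finset.sum_congr rfl; intro j _
        rw [Finset.mul_sum]
    _ = (-2 * (n:ℂ) ^ 3) * ∑' q : ℤ × ℤ, ((z - WpAux.cL ω₁ ω₂ q) ^ 3)⁻¹ := by rw [hfin]
    _ = (n:ℂ) ^ 3 * (-2 * ∑' q : ℤ × ℤ, ((z - WpAux.cL ω₁ ω₂ q) ^ 3)⁻¹) := by ring
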